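/- arXiv:2312.09713 — 2 statements merged into one kernel-verified Lean document; each statement's English description precedes it below -/
import Mathlib

section
/- Let (G,I) be an indecomposable 3-transposition group with I finite and let k be the common valency of the graph on I (the number of j ∈ I with ord(ij)=3, independent of i). Then in the Matsuo algebra B(G), the element ω = (8/(k+8)) Σ_{i∈I} x^i satisfies ω·v = 2v for all v ∈ B(G). -/
/-- Let `(G, I)` be an indecomposable 3-transposition group with `I` finite of common
valency `k`.  Then in the Matsuo algebra `B(G)`, the element `ω = (8/(k+8)) ∑_{i ∈ I} xⁱ`
satisfies `ω · v = 2v` for all `v ∈ B(G)`. -/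
theorem stmt_5 {G : Type*} [Group G] [DecidableEq G] (I : Set G) [Fintype I]
    (hinv : ∀ a ∈ I, a * a = 1 ∧ a ≠ 1)
    (hgen : Subgroup.closure I = ⊤)
    (hconj : ∀ g : G, ∀ a ∈ I, g * a * g⁻¹ ∈ I)
    (hord : ∀ a ∈ I, ∀ b ∈ I, orderOf (a * b) ≤ 3)
    (circ : I → I → I) (hcirc : ∀ i j : I, (circ i j : G) = (i : G) * j * i)
    (mul : (I → ℂ) → (I → ℂ) → (I → ℂ))
    (hmul : ∀ f g : I → ℂ, mul f g = ∑ i : I, ∑ j : I, (f i * g j) •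
      (if i = j then ((2 : ℂ) • (Pi.single i (1 : ℂ) : I → ℂ))
       else if orderOf ((i : G) * (j : G)) = 3 then
         ((4 : ℂ)⁻¹ • ((Pi.single i (1 : ℂ) : I → ℂ) + (Pi.single j (1 : ℂ) : I → ℂ)
            - (Pi.single (circ i j) (1 : ℂ) : I → ℂ)))
       else (0 : I → ℂ)))
    (hconn : ∀ a ∈ I, ∀ b ∈ I, IsConj a b)
    (k : ℕ)
    (hk : ∀ i : I, (Finset.univ.filter (fun j : I => orderOf ((i : G) * (j : G)) = 3)).card = k) :
    ∀ v : I → ℂ,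
      mul (((8 : ℂ) / ((k : ℂ) + 8)) • ∑ i : I, (Pi.single i (1 : ℂ) : I → ℂ)) v
        = (2 : ℂ) • v := by
  intro v
  have hinv' : ∀ i : I, (i : G) * (i : G) = 1 := fun i => (hinv i i.2).1
  have hordself : ∀ j : I, ¬ orderOf ((j : G) * (j : G)) = 3 := by
    intro j; rw [hinv' j, orderOf_one]; norm_num
  have hpow3 : ∀ i j : I, orderOf ((i : G) * (j : G)) = 3 → ((i : G) * (j : G)) ^ 3 = 1 := by
    intro i j h; rw [← h]; exact pow_orderOf_eq_one _
  have hmem3 : ∀ i j : I, orderOf ((i : G) * (j : G)) = 3 →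
      orderOf ((circ i j : G) * (j : G)) = 3 := by
    intro i j h
    have h3 := hpow3 i j h
    have he : (i : G) * j * i * j = ((i : G) * j)⁻¹ := by
      rw [eq_inv_iff_mul_eq_one]
      calc (i : G) * j * i * j * ((i : G) * j) = ((i : G) * j) ^ 3 := by
            simp [pow_succ, mul_assoc]
        _ = 1 := h3
    rw [hcirc]
    calc orderOf ((i : G) * j * i * j) = orderOf (((i : G) * j)⁻¹) := by rw [he]
      _ = 3 := by rw [orderOf_inv, h]
  have hinvol : ∀ i j : I, orderOf ((i : G) * (j : G)) = 3 → circ (circ i j) j = i := by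
    intro i j h
    have h3 := hpow3 i j h
    apply Subtype.ext
    rw [hcirc, hcirc]
    calc (i : G) * j * i * j * ((i : G) * j * i)
          = ((i : G) * j) ^ 3 * i := by simp [pow_succ, mul_assoc]
      _ = i := by rw [h3, one_mul]
  -- the key computation: the column sums of the structure constants
  have key : ∀ j : I, (∑ i : I,
      (if i = j then ((2 : ℂ) • (Pi.single i (1 : ℂ) : I → ℂ))
       else if orderOf ((i : G) * (j : G)) = 3 then
         ((4 : ℂ)⁻¹ • ((Pi.single i (1 : ℂ) : I → ℂ) + (Pi.single j (1 : ℂ) : I → ℂ)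
            - (Pi.single (circ i j) (1 : ℂ) : I → ℂ)))
       else (0 : I → ℂ)))
      = ((2 : ℂ) + (k : ℂ) / 4) • (Pi.single j (1 : ℂ) : I → ℂ) := by
    intro j
    rw [← Finset.add_sum_erase Finset.univ _ (Finset.mem_univ j)]
    rw [if_pos rfl]
    have h2 : ∀ i ∈ Finset.univ.erase j,
        (if i = j then ((2 : ℂ) • (Pi.single i (1 : ℂ) : I → ℂ))
         else if orderOf ((i : G) * (j : G)) = 3 then
           ((4 : ℂ)⁻¹ • ((Pi.single i (1 : ℂ) : I → ℂ) + (Pi.single j (1 : ℂ) : I → ℂ)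
              - (Pi.single (circ i j) (1 : ℂ) : I → ℂ)))
         else (0 : I → ℂ))
        = (if orderOf ((i : G) * (j : G)) = 3 then
           ((4 : ℂ)⁻¹ • ((Pi.single i (1 : ℂ) : I → ℂ) + (Pi.single j (1 : ℂ) : I → ℂ)
              - (Pi.single (circ i j) (1 : ℂ) : I → ℂ)))
         else (0 : I → ℂ)) := by
      intro i hi
      rw [if_neg (Finset.ne_of_mem_erase hi)]
    rw [Finset.sum_congr rfl h2, ← Finset.sum_filter]
    have hfe : (Finset.univ.erase j).filter (fun i : I => orderOf ((i : G) * (j : G)) = 3)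
        = Finset.univ.filter (fun i : I => orderOf ((i : G) * (j : G)) = 3) := by
      ext i
      simp only [Finset.mem_filter, Finset.mem_erase, Finset.mem_univ, true_and, and_true]
      constructor
      · exact fun h => h.2
      · intro h
        refine ⟨?_, h⟩
        rintro rfl
        exact hordself i h
    rw [hfe]
    set S := Finset.univ.filter (fun i : I => orderOf ((i : G) * (j : G)) = 3) with hS
    have hbij : ∑ i ∈ S, (Pi.single (circ i j) (1 : ℂ) : I → ℂ)
        = ∑ i ∈ S, (Pi.single i (1 : ℂ) : I → ℂ) := by
      refine Finset.sum_nbij' (fun i => circ i j) (fun i => circ i j) ?_ ?_ ?_ ?_ ?_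
      · intro i hi
        rw [hS, Finset.mem_filter] at hi ⊢
        exact ⟨Finset.mem_univ _, hmem3 i j hi.2⟩
      · intro i hi
        rw [hS, Finset.mem_filter] at hi ⊢
        exact ⟨Finset.mem_univ _, hmem3 i j hi.2⟩
      · intro i hi
        rw [hS, Finset.mem_filter] at hi
        exact hinvol i j hi.2
      · intro i hi
        rw [hS, Finset.mem_filter] at hi
        exact hinvol i j hi.2
      · intro i hi
        rfl
    have hsplit : ∑ i ∈ S, ((4 : ℂ)⁻¹ • ((Pi.single i (1 : ℂ) : I → ℂ)
          + (Pi.single j (1 : ℂ) : I → ℂ) - (Pi.single (circ i j) (1 : ℂ) : I → ℂ)))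
        = (4 : ℂ)⁻¹ • ((∑ i ∈ S, (Pi.single i (1 : ℂ) : I → ℂ))
          + (S.card : ℂ) • (Pi.single j (1 : ℂ) : I → ℂ)
          - ∑ i ∈ S, (Pi.single (circ i j) (1 : ℂ) : I → ℂ)) := by
      rw [← Finset.smul_sum]
      congr 1
      rw [Finset.sum_sub_distrib, Finset.sum_add_distrib, Finset.sum_const,
        Nat.cast_smul_eq_nsmul]
    have hicoe : ∀ i : I, ((i : G))⁻¹ = (i : G) := fun i =>
      inv_eq_of_mul_eq_one_right (hinv' i)
    have hcard : (S.card : ℂ) = (k : ℂ) := by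
      have : S = Finset.univ.filter (fun i : I => orderOf ((j : G) * (i : G)) = 3) := by
        rw [hS]
        ext i
        simp only [Finset.mem_filter, Finset.mem_univ, true_and]
        have : (j : G) * (i : G) = ((i : G) * (j : G))⁻¹ := by
          rw [mul_inv_rev, hicoe, hicoe]
        rw [this, orderOf_inv]
      rw [this, hk j]
    rw [hsplit, hbij, hcard, add_sub_cancel_left, smul_smul, ← add_smul]
    congr 1
    ring
  -- now the main computation
  rw [hmul]
  have hcoef : ∀ i : I,
      ((((8 : ℂ) / ((k : ℂ) + 8)) • ∑ i' : I, (Pi.single i' (1 : ℂ) : I → ℂ)) i)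
        = (8 : ℂ) / ((k : ℂ) + 8) := by
    intro i
    simp [Finset.sum_apply, Pi.single_apply]
  simp_rw [hcoef]
  rw [Finset.sum_comm]
  simp_rw [← Finset.smul_sum, key, smul_smul]
  have hk8 : ((k : ℂ) + 8) ≠ 0 := by
    have : ((k : ℂ) + 8) = ((k + 8 : ℕ) : ℂ) := by push_cast; ring
    rw [this]
    exact_mod_cast Nat.succ_ne_zero (k + 7)
  have hc2 : ∀ z : ℂ, (8 : ℂ) / ((k : ℂ) + 8) * z * ((2 : ℂ) + (k : ℂ) / 4) = 2 * z := by
    intro z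
    field_simp
    ring
  simp_rw [hc2]
  funext x
  simp [Finset.sum_apply, Pi.single_apply, mul_ite]
end

section
/- With αₙ₋₁ the last simple root of A_{n−1}, Λ_{n−2} the analogous weight for A_{n−2} ⊂ A_{n−1}, γ = 2nΛ_{n−1}, and γ* = γ/(2n(n−1)), one has the coset decomposition √2A_{n−1} = ⨆_{0≤i<n−1} ((√2A_{n−2} + 2iΛ_{n−2}) ⊕ (ℤγ − 2ni γ*)), arising from the identity αₙ₋₁ = 2nγ* − 2Λ_{n−2}. -/
open scoped RealInnerProductSpace

/-- The `i`-th simple root `αᵢ = εᵢ - ε_{i+1}` of the root lattice `A_{n-1}`,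
realized in `ℝⁿ`. -/
noncomputable def rootA (n : ℕ) (i : Fin (n - 1)) : EuclideanSpace ℝ (Fin n) :=
  EuclideanSpace.single ⟨i.1, by have := i.2; omega⟩ 1 -
    EuclideanSpace.single ⟨i.1 + 1, by have := i.2; omega⟩ 1

/-- The weight `Λ_{n-1} = (√2/(2n))(α₁ + 2α₂ + ⋯ + (n-1)α_{n-1})`. -/
noncomputable def weightA (n : ℕ) : EuclideanSpace ℝ (Fin n) :=
  (Real.sqrt 2 / (2 * n)) • ∑ i : Fin (n - 1), ((i : ℝ) + 1) • rootA n i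

/-- The analogous weight `Λ_{n-2}` for the sublattice `A_{n-2} ⊂ A_{n-1}`,
realized in `ℝⁿ`. -/
noncomputable def weightA' (n : ℕ) : EuclideanSpace ℝ (Fin n) :=
  (Real.sqrt 2 / (2 * ((n : ℝ) - 1))) •
    ∑ i : Fin (n - 2), ((i : ℝ) + 1) • rootA n ⟨i.1, by have := i.2; omega⟩

/-- With `α_{n-1}` the last simple root of `A_{n-1}`, `Λ_{n-2}` the analogous weight for
`A_{n-2} ⊂ A_{n-1}`, `γ = 2nΛ_{n-1}` and `γ* = γ/(2n(n-1))`, one has the identity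
`√2 α_{n-1} = 2nγ* - 2Λ_{n-2}` and the coset decomposition
`√2A_{n-1} = ⨆_{0 ≤ i < n-1} ((√2A_{n-2} + 2iΛ_{n-2}) ⊕ (ℤγ - 2ni γ*))`. -/
theorem stmt_16 (n : ℕ) (hn : 2 ≤ n)
    (γ γs : EuclideanSpace ℝ (Fin n))
    (hγ : γ = (2 * (n : ℝ)) • weightA n)
    (hγs : γs = (2 * (n : ℝ) * ((n : ℝ) - 1))⁻¹ • γ)
    (L L₂ : Submodule ℤ (EuclideanSpace ℝ (Fin n)))
    (hL : L = Submodule.span ℤ (Set.range fun i : Fin (n - 1) => Real.sqrt 2 • rootA n i))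
    (hL₂ : L₂ = Submodule.span ℤ
      (Set.range fun i : Fin (n - 2) =>
        Real.sqrt 2 • rootA n ⟨i.1, by have := i.2; omega⟩))
    (S : Fin (n - 1) → Set (EuclideanSpace ℝ (Fin n)))
    (hS : ∀ i : Fin (n - 1), S i = {x | ∃ a ∈ L₂, ∃ m : ℤ,
      x = a + (2 * (i : ℝ)) • weightA' n + m • γ - (2 * (n : ℝ) * (i : ℝ)) • γs}) :
    Real.sqrt 2 • rootA n ⟨n - 2, by omega⟩ =
        (2 * (n : ℝ)) • γs - (2 : ℝ) • weightA' n ∧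
    (L : Set (EuclideanSpace ℝ (Fin n))) = ⋃ i : Fin (n - 1), S i ∧
    (∀ i j : Fin (n - 1), i ≠ j → Disjoint (S i) (S j)) := by
  obtain ⟨m, rfl⟩ : ∃ m, n = m + 2 := ⟨n - 2, by omega⟩

  set B : EuclideanSpace ℝ (Fin (m + 2)) := Real.sqrt 2 • rootA (m + 2) ⟨m, by omega⟩ with hBdef
  -- the basic splitting identity
  have hKey : (2*((m:ℝ)+2)) • weightA (m+2)
      = (2*((m:ℝ)+1)) • weightA' (m+2) + ((m:ℝ)+1) • B := by
    rw [weightA, weightA', smul_smul, smul_smul]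
    have c1 : (2*((m:ℝ)+2)) * (Real.sqrt 2 / (2 * ((m+2:ℕ):ℝ))) = Real.sqrt 2 := by
      push_cast
      have : (2:ℝ) + (m:ℝ) * 2 ≠ 0 := by positivity
      field_simp
    have c2 : (2*((m:ℝ)+1)) * (Real.sqrt 2 / (2 * (((m+2:ℕ):ℝ) - 1))) = Real.sqrt 2 := by
      have h : (2 * (((m+2:ℕ):ℝ) - 1)) = 2*((m:ℝ)+1) := by push_cast; ring
      have h2 : (2:ℝ)*((m:ℝ)+1) ≠ 0 := by positivity
      rw [h, mul_div_assoc', mul_comm, mul_div_assoc, div_self h2, mul_one]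
    rw [c1, c2]
    show Real.sqrt 2 • ∑ i : Fin (m+1), (((i:ℕ):ℝ) + 1) • rootA (m+2) i
      = Real.sqrt 2 • ∑ i : Fin m, (((i:ℕ):ℝ) + 1) • rootA (m+2) ⟨i.1, by omega⟩
        + ((m:ℝ)+1) • (Real.sqrt 2 • rootA (m+2) ⟨m, by omega⟩)
    rw [Fin.sum_univ_castSucc, smul_add, Fin.val_last, smul_comm (Real.sqrt 2)]
    rfl
  have hm1 : ((m:ℝ) + 1) ≠ 0 := by positivity
  have hm2 : ((m:ℝ) + 2) ≠ 0 := by positivity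
  have hcast : ((m + 2 : ℕ) : ℝ) = (m:ℝ) + 2 := by push_cast; ring
  rw [hcast] at hγ hγs
  -- γ and γs in terms of weightA
  have hγs2 : (2 * ((m:ℝ)+2)) • γs = B + (2:ℝ) • weightA' (m+2) := by
    rw [hγs, hγ, smul_smul, smul_smul]
    have : 2 * ((m:ℝ)+2) * (2 * ((m:ℝ)+2) * ((m:ℝ)+2-1))⁻¹ * (2 * ((m:ℝ)+2))
        = ((m:ℝ)+1)⁻¹ * (2*((m:ℝ)+2)) := by
      have h3 : (2:ℝ) * ((m:ℝ)+2) * ((m:ℝ)+2-1) ≠ 0 := by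
        have : (m:ℝ)+2-1 = (m:ℝ)+1 := by ring
        rw [this]; positivity
      field_simp
      rw [show (m:ℝ)+2-1 = (m:ℝ)+1 by ring, div_self hm1]
    rw [this, ← smul_smul, hKey, smul_add, smul_smul, smul_smul]
    rw [show ((m:ℝ)+1)⁻¹ * (2*((m:ℝ)+1)) = 2 by field_simp,
      show ((m:ℝ)+1)⁻¹ * ((m:ℝ)+1) = 1 by field_simp, one_smul]
    ring_nf
    abel
  -- Part 1
  have part1 : B = (2 * ((m:ℝ)+2)) • γs - (2:ℝ) • weightA' (m+2) := by
    rw [hγs2]; abel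
  -- conversion between ℤ-smul and ℝ-smul
  have hq : ∀ (k : ℤ) (v : EuclideanSpace ℝ (Fin (m+2))), k • v = ((k:ℝ)) • v :=
    fun k v => (Int.cast_smul_eq_zsmul ℝ k v).symm
  -- γ in terms of B and weightA'
  have hγ2 : γ = (2*((m:ℝ)+2)*((m:ℝ)+2-1)) • γs := by
    rw [hγs, smul_smul, mul_inv_cancel₀ (by
      have : (m:ℝ)+2-1 = (m:ℝ)+1 := by ring
      rw [this]; positivity), one_smul]
  have hγB : γ = ((m:ℝ)+1) • (B + (2:ℝ) • weightA' (m+2)) := by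
    rw [hγ2, ← hγs2, smul_smul]
    congr 1
    ring
  -- the integral vector W' spanning 2(m+1)Λ'
  set W' : EuclideanSpace ℝ (Fin (m+2)) :=
    ∑ i : Fin m, (((i:ℕ):ℤ)+1) • (Real.sqrt 2 • rootA (m+2) ⟨i.1, by omega⟩) with hW'def
  have hW' : ((2:ℝ)*((m:ℝ)+1)) • weightA' (m+2) = W' := by
    rw [weightA', smul_smul]
    have c2 : (2*((m:ℝ)+1)) * (Real.sqrt 2 / (2 * (((m+2:ℕ):ℝ) - 1))) = Real.sqrt 2 := by
      have h : (2 * (((m+2:ℕ):ℝ) - 1)) = 2*((m:ℝ)+1) := by push_cast; ring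
      have h2 : (2:ℝ)*((m:ℝ)+1) ≠ 0 := by positivity
      rw [h, mul_div_assoc', mul_comm, mul_div_assoc, div_self h2, mul_one]
    rw [c2, hW'def, Finset.smul_sum]
    apply Finset.sum_congr rfl
    intro i _
    rw [smul_comm, ← Int.cast_smul_eq_zsmul ℝ]
    norm_num
  have hW'mem : W' ∈ L₂ := by
    rw [hL₂, hW'def]
    exact Submodule.sum_mem _ fun i _ =>
      Submodule.smul_mem _ _ (Submodule.subset_span ⟨i, rfl⟩)
  simp only [hcast] at hS
  -- the key identity for the cosets
  have key : ∀ (a : EuclideanSpace ℝ (Fin (m+2))) (q : ℤ) (i : Fin (m+1)),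
      a + (2 * ((i:ℕ):ℝ)) • weightA' (m+2) + q • γ - (2*((m:ℝ)+2)*((i:ℕ):ℝ)) • γs
        = (a + q • W') + (q * ((m:ℤ)+1) - ((i:ℕ):ℤ)) • B := by
    intro a q i
    have hγsI : (2*((m:ℝ)+2)*((i:ℕ):ℝ)) • γs = ((i:ℕ):ℝ) • (B + (2:ℝ)•weightA' (m+2)) := by
      rw [← hγs2, smul_smul]
      congr 1
      ring
    rw [hq q γ, hq _ B, hγB, ← hW', hγsI]
    push_cast
    module
  -- simplified description of the pieces S i
  have hSi : ∀ i : Fin (m+1), S i = {x | ∃ a ∈ L₂, ∃ q : ℤ,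
      x = a + (q * ((m:ℤ)+1) - ((i:ℕ):ℤ)) • B} := by
    intro i
    rw [hS i]
    ext x
    simp only [Set.mem_setOf_eq]
    constructor
    · rintro ⟨a, ha, q, rfl⟩
      exact ⟨a + q • W', Submodule.add_mem _ ha (Submodule.smul_mem _ q hW'mem), q, key a q i⟩
    · rintro ⟨a, ha, q, rfl⟩
      refine ⟨a - q • W', Submodule.sub_mem _ ha (Submodule.smul_mem _ q hW'mem), q, ?_⟩
      rw [key (a - q • W') q i, sub_add_cancel]
  have hL₂L : L₂ ≤ L := by
    rw [hL, hL₂]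
    apply Submodule.span_le.mpr
    rintro _ ⟨i, rfl⟩
    exact Submodule.subset_span ⟨⟨i.1, by omega⟩, rfl⟩
  have hBL : B ∈ L := by
    rw [hL]
    exact Submodule.subset_span ⟨⟨m, by omega⟩, rfl⟩
  refine ⟨by rw [hcast]; exact part1, ?_, ?_⟩
  · -- the union
    ext x
    simp only [Set.mem_iUnion, SetLike.mem_coe]
    constructor
    · intro hx
      have hrep : ∃ a ∈ L₂, ∃ k : ℤ, x = a + k • B := by
        rw [hL] at hx
        induction hx using Submodule.span_induction with
        | mem y hy =>
          obtain ⟨j, rfl⟩ := hy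
          by_cases hj : j.1 < m
          · refine ⟨Real.sqrt 2 • rootA (m+2) j, ?_, 0, by simp⟩
            rw [hL₂]
            exact Submodule.subset_span ⟨⟨j.1, hj⟩, rfl⟩
          · have hj' : j = ⟨m, by omega⟩ := by
              apply Fin.ext
              have := j.2
              simp only []
              omega
            exact ⟨0, zero_mem _, 1, by rw [hj', hBdef]; simp⟩
        | zero => exact ⟨0, zero_mem _, 0, by simp⟩
        | add y z hy hz ihy ihz =>
          obtain ⟨a, ha, k, rfl⟩ := ihy
          obtain ⟨b, hb, l, rfl⟩ := ihz
          exact ⟨a + b, add_mem ha hb, k + l, by rw [add_smul]; abel⟩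
        | smul c y hy ihy =>
          obtain ⟨a, ha, k, rfl⟩ := ihy
          exact ⟨c • a, Submodule.smul_mem _ _ ha, c * k, by rw [smul_add, mul_smul]⟩
      obtain ⟨a, ha, k, rfl⟩ := hrep
      have hmpos : (0:ℤ) < (m:ℤ)+1 := by omega
      set d : ℤ := (-k) / ((m:ℤ)+1) with hd
      set r : ℤ := (-k) % ((m:ℤ)+1) with hr
      have hr0 : 0 ≤ r := Int.emod_nonneg _ (by omega)
      have hr1 : r < (m:ℤ)+1 := Int.emod_lt_of_pos _ hmpos
      have hde : ((m:ℤ)+1) * d + r = -k := Int.mul_ediv_add_emod _ _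
      refine ⟨⟨r.toNat, by omega⟩, ?_⟩
      rw [hSi]
      refine ⟨a, ha, -d, ?_⟩
      have hcoe : (((⟨r.toNat, by omega⟩ : Fin (m+1)) : ℕ) : ℤ) = r := by
        simp [Int.toNat_of_nonneg hr0]
      rw [show (-d) * ((m:ℤ)+1) - (((⟨r.toNat, by omega⟩ : Fin (m+1)) : ℕ) : ℤ) = k by
        rw [hcoe]; linarith]
    · rintro ⟨i, hxi⟩
      rw [hSi] at hxi
      obtain ⟨a, ha, q, rfl⟩ := hxi
      exact add_mem (hL₂L ha) (Submodule.smul_mem _ _ hBL)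
  · -- disjointness
    intro i j hij
    rw [Set.disjoint_left]
    intro x hxi hxj
    rw [hSi] at hxi hxj
    obtain ⟨a, ha, q, rfl⟩ := hxi
    obtain ⟨b, hb, p, hx⟩ := hxj
    set ι : Fin (m+2) := ⟨m+1, by omega⟩ with hι
    have hev : ∀ y ∈ L₂, (y : EuclideanSpace ℝ (Fin (m+2))) ι = 0 := by
      intro y hy
      rw [hL₂] at hy
      induction hy using Submodule.span_induction with
      | mem z hz =>
        obtain ⟨l, rfl⟩ := hz
        have h1 : ι ≠ (⟨l.1, by have := l.2; omega⟩ : Fin (m+2)) := by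
          simp only [hι, Fin.ne_iff_vne]
          have := l.2
          omega
        have h2 : ι ≠ (⟨l.1 + 1, by have := l.2; omega⟩ : Fin (m+2)) := by
          simp only [hι, Fin.ne_iff_vne]
          have := l.2
          omega
        simp [rootA, EuclideanSpace.single_apply, if_neg h1, if_neg h2]
      | zero => rfl
      | add y z hy hz ihy ihz =>
        have : (y + z) ι = y ι + z ι := rfl
        rw [this, ihy, ihz, add_zero]
      | smul c y hy ihy =>
        have : (c • y) ι = c • (y ι) := rfl
        rw [this, ihy, smul_zero]
    have hBev : B ι = -Real.sqrt 2 := by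
      have h1 : ι ≠ (⟨m, by omega⟩ : Fin (m+2)) := by
        simp only [hι, Fin.ne_iff_vne]
        omega
      have h2 : ι = (⟨m + 1, by omega⟩ : Fin (m+2)) := rfl
      simp [hBdef, rootA, EuclideanSpace.single_apply, if_neg h1]
      exact fun h => absurd h2 h
    rw [hq _ B] at hx
    rw [hq _ B] at hx
    have hcoord := congrArg (fun v : EuclideanSpace ℝ (Fin (m+2)) => v ι) hx
    simp only [PiLp.add_apply, PiLp.smul_apply, smul_eq_mul, hev a ha, hev b hb,
      hBev, zero_add] at hcoord
    have hKK : q * ((m:ℤ)+1) - ((i:ℕ):ℤ) = p * ((m:ℤ)+1) - ((j:ℕ):ℤ) := by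
      have h2 : ((q * ((m:ℤ)+1) - ((i:ℕ):ℤ) : ℤ) : ℝ) = ((p * ((m:ℤ)+1) - ((j:ℕ):ℤ) : ℤ) : ℝ) := by
        have hs : Real.sqrt 2 ≠ 0 := by positivity
        exact mul_right_cancel₀ (neg_ne_zero.mpr hs) hcoord
      exact_mod_cast h2
    have hi' : ((i:ℕ):ℤ) < (m:ℤ)+1 := by
      have := i.2
      omega
    have hj' : ((j:ℕ):ℤ) < (m:ℤ)+1 := by
      have := j.2
      omega
    have hi0 : (0:ℤ) ≤ ((i:ℕ):ℤ) := Int.ofNat_nonneg _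
    have hj0 : (0:ℤ) ≤ ((j:ℕ):ℤ) := Int.ofNat_nonneg _
    have hsub : ((i:ℕ):ℤ) - ((j:ℕ):ℤ) = (q - p) * ((m:ℤ)+1) := by linear_combination -hKK
    have hqp : q - p = 0 := by
      by_contra hc
      have h1 : (1:ℤ) ≤ |q - p| := Int.one_le_abs (by omega)
      have h2 : ((m:ℤ)+1) ≤ |(q-p) * ((m:ℤ)+1)| := by
        rw [abs_mul, abs_of_nonneg (by omega : (0:ℤ) ≤ (m:ℤ)+1)]
        exact le_mul_of_one_le_left (by omega) h1
      rw [← hsub] at h2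
      rcases abs_cases (((i:ℕ):ℤ) - ((j:ℕ):ℤ)) with ⟨h, _⟩ | ⟨h, _⟩ <;> omega
    apply hij
    apply Fin.ext
    have : ((i:ℕ):ℤ) = ((j:ℕ):ℤ) := by
      have h3 := hsub
      rw [hqp, zero_mul] at h3
      omega
    exact_mod_cast this
end
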